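/- Let ℌ be a quotient-closed Fitting class and 𝔉 a formation. For every finite group G, the terminal term N^∞_{ℌ,𝔉}(G) of the ascending ℌ-𝔉-norm series equals the intersection of all normal subgroups N of G such that N_{ℌ,𝔉}(G/N) = 1. -/

import Mathlib

universe u

/-- A class of groups (in universe `u`). -/
def GroupClass : Type (u + 1) := ∀ (G : Type u) [Group G], Prop

/-- Closed under homomorphic images (quotients). -/
def GroupClass.QClosed (F : GroupClass.{u}) : Prop :=
  ∀ (G : Type u) [Group G] (H : Type u) [Group H] (f : G →* H),
    Function.Surjective f → F G → F H

/-- Closed under subdirect products: if `G/N₁ ∈ F` and `G/N₂ ∈ F` then `G/(N₁ ⊓ N₂) ∈ F`. -/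
def GroupClass.SubdirClosed (F : GroupClass.{u}) : Prop :=
  ∀ (G : Type u) [Group G] (N₁ N₂ : Subgroup G) (h₁ : N₁.Normal) (h₂ : N₂.Normal),
    (letI := h₁; F (G ⧸ N₁)) → (letI := h₂; F (G ⧸ N₂)) →
    (letI : (N₁ ⊓ N₂).Normal :=
      { conj_mem := fun x hx g => ⟨h₁.conj_mem x hx.1 g, h₂.conj_mem x hx.2 g⟩ };
      F (G ⧸ (N₁ ⊓ N₂)))

/-- Closed under taking subgroups. -/
def GroupClass.SClosed (F : GroupClass.{u}) : Prop :=
  ∀ (G : Type u) [Group G] (H : Subgroup G), F G → F ↥H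

/-- Closed under taking normal subgroups. -/
def GroupClass.NClosed (F : GroupClass.{u}) : Prop :=
  ∀ (G : Type u) [Group G] (N : Subgroup G), N.Normal → F G → F ↥N

/-- Closed under products of normal subgroups. -/
def GroupClass.NProdClosed (F : GroupClass.{u}) : Prop :=
  ∀ (G : Type u) [Group G] (N₁ N₂ : Subgroup G), N₁.Normal → N₂.Normal →
    F ↥N₁ → F ↥N₂ → F ↥(N₁ ⊔ N₂)

/-- Closed under extensions. -/
def GroupClass.ExtClosed (F : GroupClass.{u}) : Prop :=
  ∀ (G : Type u) [Group G] (N : Subgroup G) (hN : N.Normal),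
    F ↥N → (letI := hN; F (G ⧸ N)) → F G

/-- `R` is the `F`-residual of `G`: the smallest normal subgroup with quotient in `F`. -/
def IsResidual (F : GroupClass.{u}) (G : Type u) [Group G] (R : Subgroup G) : Prop :=
  ∃ hR : R.Normal, (letI := hR; F (G ⧸ R)) ∧
    ∀ (N : Subgroup G) (hN : N.Normal), (letI := hN; F (G ⧸ N)) → R ≤ N

/-- `R` is the `H`-radical of `G`: the largest normal subgroup belonging to `H`. -/
def IsHRadical (H : GroupClass.{u}) (G : Type u) [Group G] (R : Subgroup G) : Prop :=
  R.Normal ∧ H ↥R ∧ ∀ N : Subgroup G, N.Normal → H ↥N → N ≤ R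

/-- The `ℌ`-`𝔉`-norm of `G` (given a residual function `res` and a radical function `rad`):
the intersection over all subgroups `K ≤ G` of the normalizers of `K^𝔉 G_ℌ`. -/
noncomputable def HFnorm (res rad : ∀ (A : Type u) [Group A], Subgroup A)
    (G : Type u) [Group G] : Subgroup G :=
  ⨅ K : Subgroup G, Subgroup.normalizer ((Subgroup.map K.subtype (res ↥K) ⊔ rad G : Subgroup G) : Set G)

/-- `G` is a `π`-group: every prime dividing its order lies in `π`. -/
def IsPiGroup (π : Set ℕ) (G : Type u) [Group G] : Prop :=
  ∀ p : ℕ, p.Prime → p ∣ Nat.card G → p ∈ π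

/-- The subgroup `O_π(G)`, generated by all normal `π`-subgroups of `G`. -/
noncomputable def Opi (π : Set ℕ) (G : Type u) [Group G] : Subgroup G :=
  ⨆ (N : Subgroup G) (_ : N.Normal) (_ : IsPiGroup π ↥N), N

/-- `G` is `π`-solvable: it has a finite normal series whose factors are
`π'`-groups or solvable `π`-groups. -/
def IsPiSolvable (π : Set ℕ) (G : Type u) [Group G] : Prop :=
  ∃ (n : ℕ) (c : Fin (n + 1) → Subgroup G),
    c 0 = ⊥ ∧ c (Fin.last n) = ⊤ ∧
    ∀ i : Fin n, (c i.castSucc) ≤ (c i.succ) ∧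
      ((c i.castSucc).subgroupOf (c i.succ)).Normal ∧
      ∀ h : ((c i.castSucc).subgroupOf (c i.succ)).Normal,
        (letI := h;
          IsPiGroup {p | p ∉ π} (↥(c i.succ) ⧸ (c i.castSucc).subgroupOf (c i.succ)) ∨
          (IsPiGroup π (↥(c i.succ) ⧸ (c i.castSucc).subgroupOf (c i.succ)) ∧
            IsSolvable (↥(c i.succ) ⧸ (c i.castSucc).subgroupOf (c i.succ))))

/-- `G` is `π`-nilpotent: it has a normal `π'`-subgroup with nilpotent quotient
(equivalently `G/O_{π'}(G)` is nilpotent). -/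
def IsPiNilpotent (π : Set ℕ) (G : Type u) [Group G] : Prop :=
  ∃ (N : Subgroup G) (hN : N.Normal), IsPiGroup {p | p ∉ π} ↥N ∧
    (letI := hN; Group.IsNilpotent (G ⧸ N))

/-- `G` is `S`-critical for the class `F`. -/
def CritS (F : GroupClass.{u}) (G : Type u) [Group G] : Prop :=
  ¬ F G ∧ ∀ K : Subgroup G, K ≠ ⊤ → F ↥K

/-- The ascending norm series associated with a "norm" functor `n`:
`N⁰ = 1` and `Nⁱ(G)` is the preimage in `G` of `n(G/Nⁱ⁻¹(G))`. -/
inductive NormChain (n : ∀ (A : Type u) [Group A], Subgroup A)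
    (G : Type u) [Group G] : Subgroup G → Prop
  | base : NormChain n G ⊥
  | step (M : Subgroup G) (hM : M.Normal) : NormChain n G M →
      NormChain n G (letI := hM; Subgroup.comap (QuotientGroup.mk' M) (n (G ⧸ M)))

/-- `S` is the terminal term `N^∞(G)` of the ascending norm series of `G`. -/
def IsNormTerminal (n : ∀ (A : Type u) [Group A], Subgroup A)
    (G : Type u) [Group G] (S : Subgroup G) : Prop :=
  NormChain n G S ∧ ∃ hS : S.Normal, (letI := hS; n (G ⧸ S) = ⊥)

/-- `L/K` is a chief factor of `G`. -/
def IsChiefFactor (G : Type u) [Group G] (K L : Subgroup G) : Prop :=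
  K.Normal ∧ L.Normal ∧ K < L ∧
    ∀ M : Subgroup G, M.Normal → K ≤ M → M ≤ L → M = K ∨ M = L

/-- The chief factor `L/K` is `X`-central in `G`:
`(L/K) ⋊ (G/C_G(L/K)) ∈ X`, where `G/C_G(L/K)` acts on `L/K` by conjugation. -/
def IsXCentral (X : GroupClass.{u}) (G : Type u) [Group G] (K L : Subgroup G)
    (hK : K.Normal) (hL : L.Normal) (_ : K ≤ L) : Prop :=
  ∃ (C : Subgroup G) (hC : C.Normal),
    (∀ g : G, g ∈ C ↔ ∀ x ∈ L, g * x * g⁻¹ * x⁻¹ ∈ K) ∧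
    (letI := hC; letI := hK.subgroupOf L;
      ∃ φ : (G ⧸ C) →* MulAut (↥L ⧸ K.subgroupOf L),
        (∀ (g : G) (x : ↥L), φ (QuotientGroup.mk g) (QuotientGroup.mk x) =
          QuotientGroup.mk ⟨g * ↑x * g⁻¹, hL.conj_mem ↑x x.2 g⟩) ∧
        X (SemidirectProduct (↥L ⧸ K.subgroupOf L) (G ⧸ C) φ))

/-- A normal subgroup `N` of `G` is `πX`-hypercentral: every `G`-chief factor below `N`
of order divisible by some prime in `π` is `X`-central in `G`. -/
def PiHypercentral (π : Set ℕ) (X : GroupClass.{u}) (G : Type u) [Group G]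
    (N : Subgroup G) : Prop :=
  N.Normal ∧ ∀ K L : Subgroup G, ∀ hcf : IsChiefFactor G K L, L ≤ N →
    (∃ p ∈ π, p.Prime ∧ p ∣ Nat.card (↥L ⧸ K.subgroupOf L)) →
    IsXCentral X G K L hcf.1 hcf.2.1 hcf.2.2.1.le

/-- The `πX`-hypercentre of `G`: the product of all `πX`-hypercentral normal subgroups. -/
noncomputable def piHypercentre (π : Set ℕ) (X : GroupClass.{u})
    (G : Type u) [Group G] : Subgroup G :=
  sSup {N : Subgroup G | PiHypercentral π X G N}

/-- A group is quaternion-free if it has no section isomorphic to `Q₈`. -/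
def QuaternionFree (X : Type u) [Group X] : Prop :=
  ∀ (H : Subgroup X) (K : Subgroup ↥H) (hK : K.Normal),
    (letI := hK; ¬ Nonempty ((↥H ⧸ K) ≃* QuaternionGroup 2))

open Classical in
/-- `Ψ_p(X)`: generated by the elements of order `p` (for odd `p`); for `p = 2`, by the
elements of order `2` if the Sylow `2`-subgroups are quaternion-free, and by the elements
of order `2` or `4` otherwise. -/
noncomputable def Psi (p : ℕ) (X : Type u) [Group X] : Subgroup X :=
  if p = 2 ∧ ¬ (∀ P : Sylow 2 X, QuaternionFree ↥(P : Subgroup X)) then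
    Subgroup.closure {x : X | orderOf x = 2 ∨ orderOf x = 4}
  else Subgroup.closure {x : X | orderOf x = p}

/-- The `π'𝔉`-norm of `G`: the intersection over all subgroups `K ≤ G` of the
normalizers of `K^𝔉 O_{π'}(G)`. -/
noncomputable def piPrimeNorm (π : Set ℕ) (res : ∀ (A : Type u) [Group A], Subgroup A)
    (G : Type u) [Group G] : Subgroup G :=
  HFnorm res (fun B iB => letI := iB; Opi {p | p ∉ π} B) G
section NormHelpers

/-- Conjugation by an element of the normalizer fixes the subgroup. -/
lemma aux_map_conj_eq {G : Type*} [Group G] {A : Subgroup G} {x : G}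
    (hx : x ∈ Subgroup.normalizer (A : Set G)) :
    A.map (MulAut.conj x).toMonoidHom = A := by
  ext y
  simp only [Subgroup.mem_map, MulEquiv.coe_toMonoidHom, MulAut.conj_apply]
  constructor
  · rintro ⟨a, ha, rfl⟩
    exact (Subgroup.mem_normalizer_iff.mp hx a).mp ha
  · intro hy
    refine ⟨x⁻¹ * y * x, ?_, by group⟩
    have := (Subgroup.mem_normalizer_iff.mp hx (x⁻¹ * y * x)).mpr
    apply this
    have h : x * (x⁻¹ * y * x) * x⁻¹ = y := by group
    rwa [h]

/-- If `x` normalizes `A` and `B` is normal, then `x` normalizes `A ⊔ B`. -/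
lemma aux_mem_normalizer_sup {G : Type*} [Group G] {A B : Subgroup G} (hB : B.Normal)
    {x : G} (hx : x ∈ Subgroup.normalizer (A : Set G)) : x ∈ Subgroup.normalizer ((A ⊔ B : Subgroup G) : Set G) := by
  have hxB : x ∈ Subgroup.normalizer (B : Set G) := Subgroup.mem_normalizer_iff.2 fun h =>
    ⟨fun hh => hB.conj_mem h hh x, fun hh => by
      have := hB.conj_mem _ hh x⁻¹
      simpa [mul_assoc] using this⟩
  have hmap : (A ⊔ B).map (MulAut.conj x).toMonoidHom = A ⊔ B := by
    rw [Subgroup.map_sup, aux_map_conj_eq hx, aux_map_conj_eq hxB]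
  rw [Subgroup.mem_normalizer_iff]
  intro h
  constructor
  · intro hh
    have : (MulAut.conj x) h ∈ (A ⊔ B).map (MulAut.conj x).toMonoidHom :=
      Subgroup.mem_map_of_mem _ hh
    rw [hmap] at this
    simpa [MulAut.conj_apply] using this
  · intro hh
    have hmem : x * h * x⁻¹ ∈ (A ⊔ B).map (MulAut.conj x).toMonoidHom := by
      rw [hmap]; exact hh
    obtain ⟨s, hs, hs2⟩ := hmem
    simp only [MulEquiv.coe_toMonoidHom, MulAut.conj_apply] at hs2
    have : s = h := by
      have := mul_right_cancel hs2
      exact mul_left_cancel this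
    rwa [← this]

/-- The image of a normalizer element normalizes the image. -/
lemma aux_map_mem_normalizer {G H : Type*} [Group G] [Group H] (f : G →* H)
    {T : Subgroup G} {x : G} (hx : x ∈ Subgroup.normalizer (T : Set G)) :
    f x ∈ Subgroup.normalizer ((T.map f : Subgroup H) : Set H) := by
  rw [Subgroup.mem_normalizer_iff] at hx ⊢
  intro y
  constructor
  · rintro ⟨t, ht, rfl⟩
    exact ⟨x * t * x⁻¹, (hx t).mp ht, by simp⟩
  · rintro ⟨t, ht, h⟩
    refine ⟨x⁻¹ * t * x, (hx _).mpr ?_, ?_⟩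
    · have heq : x * (x⁻¹ * t * x) * x⁻¹ = t := by group
      rwa [heq]
    · have hy : y = (f x)⁻¹ * f t * f x := by
        rw [h]; group
      simp [hy, mul_assoc]

/-- The residual is preserved by epimorphisms. -/
lemma aux_resEpi {F : GroupClass.{u}} (hFq : F.QClosed)
    (res : ∀ (A : Type u) [Group A], Subgroup A)
    (hres : ∀ (A : Type u) [Group A] [Finite A], IsResidual F A (res A))
    (A B : Type u) [Group A] [Group B] [Finite A] [Finite B]
    (g : A →* B) (hg : Function.Surjective g) :
    (res A).map g = res B := by
  obtain ⟨hRA, hFA, hminA⟩ := hres A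
  obtain ⟨hRB, hFB, hminB⟩ := hres B
  letI := hRA
  letI := hRB
  apply le_antisymm
  · set φ := (QuotientGroup.mk' (res B)).comp g with hφ
    have hφs : Function.Surjective φ := (QuotientGroup.mk'_surjective _).comp hg
    have hker : φ.ker = (res B).comap g := by
      rw [hφ, ← MonoidHom.comap_ker, QuotientGroup.ker_mk']
    have e := QuotientGroup.quotientKerEquivOfSurjective φ hφs
    have hFAq : F (A ⧸ φ.ker) := hFq _ _ e.symm.toMonoidHom e.symm.surjective hFB
    have hle : res A ≤ φ.ker := hminA φ.ker (MonoidHom.normal_ker φ) hFAq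
    calc (res A).map g ≤ φ.ker.map g := Subgroup.map_mono hle
      _ = ((res B).comap g).map g := by rw [hker]
      _ ≤ res B := Subgroup.map_comap_le g _
  · have hN : ((res A).map g).Normal := hRA.map g hg
    letI := hN
    refine hminB _ hN ?_
    have hle : res A ≤ ((res A).map g).comap g := Subgroup.le_comap_map g _
    let ψ := QuotientGroup.map (res A) ((res A).map g) g hle
    have hψs : Function.Surjective ψ := by
      intro y
      obtain ⟨b, rfl⟩ := QuotientGroup.mk_surjective y
      obtain ⟨a, rfl⟩ := hg b
      exact ⟨QuotientGroup.mk a, rfl⟩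
    exact hFq _ _ ψ hψs hFA

/-- The image of the radical lies in the radical of the image. -/
lemma aux_radEpi {Hc : GroupClass.{u}} (hHq : Hc.QClosed)
    (rad : ∀ (A : Type u) [Group A], Subgroup A)
    (hrad : ∀ (A : Type u) [Group A] [Finite A], IsHRadical Hc A (rad A))
    (A B : Type u) [Group A] [Group B] [Finite A] [Finite B]
    (g : A →* B) (hg : Function.Surjective g) :
    (rad A).map g ≤ rad B := by
  obtain ⟨hnA, hHA, _⟩ := hrad A
  obtain ⟨_, _, hmaxB⟩ := hrad B
  exact hmaxB _ (hnA.map g hg)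
    (hHq _ _ (g.subgroupMap (rad A)) (g.subgroupMap_surjective (rad A)) hHA)

/-- The image of the `ℌ`-`𝔉`-norm under an epimorphism lies in the norm of the image. -/
lemma aux_normMap {Hc F : GroupClass.{u}} (hHq : Hc.QClosed) (hFq : F.QClosed)
    (res rad : ∀ (A : Type u) [Group A], Subgroup A)
    (hres : ∀ (A : Type u) [Group A] [Finite A], IsResidual F A (res A))
    (hrad : ∀ (A : Type u) [Group A] [Finite A], IsHRadical Hc A (rad A))
    (G H : Type u) [Group G] [Group H] [Finite G] [Finite H]
    (f : G →* H) (hf : Function.Surjective f) :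
    (HFnorm res rad G).map f ≤ HFnorm res rad H := by
  rintro _ ⟨x, hx, rfl⟩
  rw [HFnorm] at hx
  rw [HFnorm, Subgroup.mem_iInf]
  intro Kb
  set K : Subgroup G := Kb.comap f with hK
  have hx' : x ∈ Subgroup.normalizer ((Subgroup.map K.subtype (res ↥K) ⊔ rad G : Subgroup G) : Set G) :=
    Subgroup.mem_iInf.mp hx K
  have hcomp : Kb.subtype.comp (f.subgroupComap Kb) = f.comp K.subtype :=
    MonoidHom.ext fun a => rfl
  have hsurj' : Function.Surjective (f.subgroupComap Kb) := by
    rintro ⟨y, hy⟩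
    obtain ⟨a, rfl⟩ := hf y
    exact ⟨⟨a, hy⟩, rfl⟩
  have hres' : (res ↥K).map (f.subgroupComap Kb) = res ↥Kb :=
    aux_resEpi hFq res hres _ _ _ hsurj'
  have claim1 : (Subgroup.map K.subtype (res ↥K)).map f
      = Subgroup.map Kb.subtype (res ↥Kb) := by
    rw [Subgroup.map_map, ← hcomp, ← Subgroup.map_map, hres']
  have hradle : (rad G).map f ≤ rad H := aux_radEpi hHq rad hrad _ _ _ hf
  have h1 : f x ∈ Subgroup.normalizer (((Subgroup.map K.subtype (res ↥K) ⊔ rad G).map f : Subgroup H) : Set H) :=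
    aux_map_mem_normalizer f hx'
  rw [Subgroup.map_sup, claim1] at h1
  have h2 := aux_mem_normalizer_sup (hrad H).1 h1
  have heq : (Subgroup.map Kb.subtype (res ↥Kb) ⊔ (rad G).map f) ⊔ rad H
      = Subgroup.map Kb.subtype (res ↥Kb) ⊔ rad H := by
    rw [sup_assoc, sup_eq_right.mpr hradle]
  rwa [heq] at h2

end NormHelpers

/-- For a quotient-closed Fitting class `ℌ` and a formation `𝔉`,
`N^∞_{ℌ,𝔉}(G) = ⋂ {N ⊴ G : N_{ℌ,𝔉}(G/N) = 1}`. -/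
theorem norm_infty_eq_iInf (Hc F : GroupClass.{u})
    (hHn : Hc.NClosed) (hHp : Hc.NProdClosed) (hHq : Hc.QClosed)
    (hFq : F.QClosed) (hFsd : F.SubdirClosed)
    (res rad : ∀ (A : Type u) [Group A], Subgroup A)
    (hres : ∀ (A : Type u) [Group A] [Finite A], IsResidual F A (res A))
    (hrad : ∀ (A : Type u) [Group A] [Finite A], IsHRadical Hc A (rad A))
    (G : Type u) [Group G] [Finite G] (S : Subgroup G)
    (hterm : IsNormTerminal (HFnorm res rad) G S) :
    S = ⨅ (N : Subgroup G), ⨅ (hN : N.Normal),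
      ⨅ (_ : (letI := hN; HFnorm res rad (G ⧸ N)) = ⊥), N := by
  apply le_antisymm
  · refine le_iInf fun N => le_iInf fun hN => le_iInf fun hval => ?_
    have hch := hterm.1
    clear hterm
    induction hch with
    | base => exact bot_le
    | step M hM hMc ih =>
      intro x hx
      letI := hM
      letI := hN
      have hxm : QuotientGroup.mk' M x ∈ HFnorm res rad (G ⧸ M) :=
        Subgroup.mem_comap.mp hx
      have hle : M ≤ N := ih
      have hle' : M ≤ N.comap (MonoidHom.id G) := hle
      let g : (G ⧸ M) →* (G ⧸ N) := QuotientGroup.map M N (MonoidHom.id G) hle'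
      have hgs : Function.Surjective g := by
        intro y
        obtain ⟨a, rfl⟩ := QuotientGroup.mk_surjective y
        exact ⟨QuotientGroup.mk a, rfl⟩
      have hmem := aux_normMap hHq hFq res rad hres hrad _ _ g hgs
        ⟨_, hxm, rfl⟩
      rw [hval] at hmem
      have h1 : g (QuotientGroup.mk' M x) = 1 := Subgroup.mem_bot.mp hmem
      have hgx : g (QuotientGroup.mk' M x) = QuotientGroup.mk x := by
        simp [g, QuotientGroup.map_mk']
      rw [hgx] at h1
      exact (QuotientGroup.eq_one_iff x).mp h1
  · obtain ⟨_, hS, hbot⟩ := hterm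
    exact iInf_le_of_le S (iInf_le_of_le hS (iInf_le _ hbot))
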